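/- Let μ and ν be nonzero finite Borel measures on ℝ with compact support, x₋ = inf(supp μ), y₋ = inf(supp ν), z₋ = x₋ + y₋. Then for every ε > 0: μ(B(x₋, ε/2)) · ν(B(y₋, ε/2)) ≤ (μ ∗ ν)(B(z₋, ε)) ≤ μ(B(x₋, ε)) · ν(B(y₋, ε)). -/

import Mathlib

open MeasureTheory Topology Filter

/-- Convolution of two Borel measures on ℝ: pushforward of the product measure
under the addition map. -/
noncomputable def mconv (μ ν : Measure ℝ) : Measure ℝ :=
  (μ.prod ν).map (fun p : ℝ × ℝ => p.1 + p.2)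

/-- Topological support of a Borel measure on ℝ: the (closed) set of points all of
whose neighbourhoods have positive measure. -/
def msupp (μ : Measure ℝ) : Set ℝ := {x : ℝ | ∀ ε > 0, 0 < μ (Metric.ball x ε)}

lemma msupp_compl_null (μ : Measure ℝ) : μ (msupp μ)ᶜ = 0 := by
  apply measure_null_of_locally_null
  intro x hx
  simp only [msupp, Set.mem_compl_iff, Set.mem_setOf_eq, not_forall] at hx
  obtain ⟨δ, hδ, h0⟩ := hx
  exact ⟨Metric.ball x δ, nhdsWithin_le_nhds (Metric.ball_mem_nhds x hδ),
    le_antisymm (not_lt.mp h0) zero_le⟩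

lemma lt_sInf_null (μ : Measure ℝ) (hμc : IsCompact (msupp μ)) :
    μ {x | x < sInf (msupp μ)} = 0 := by
  refine measure_mono_null (fun x hx => ?_) (msupp_compl_null μ)
  intro hmem
  exact absurd (csInf_le hμc.bddBelow hmem) (not_le.mpr hx)

/-- Two-sided estimate for the measure of a ball around the left boundary of the
support of a convolution (key step in the proof of Lemma 2). -/
theorem convolution_ball_boundary_bounds
    (μ ν : Measure ℝ) [IsFiniteMeasure μ] [IsFiniteMeasure ν]
    (hμ0 : μ ≠ 0) (hν0 : ν ≠ 0)
    (hμc : IsCompact (msupp μ)) (hνc : IsCompact (msupp ν))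
    (ε : ℝ) (hε : 0 < ε) :
    μ (Metric.ball (sInf (msupp μ)) (ε/2)) * ν (Metric.ball (sInf (msupp ν)) (ε/2)) ≤
      mconv μ ν (Metric.ball (sInf (msupp μ) + sInf (msupp ν)) ε) ∧
    mconv μ ν (Metric.ball (sInf (msupp μ) + sInf (msupp ν)) ε) ≤
      μ (Metric.ball (sInf (msupp μ)) ε) * ν (Metric.ball (sInf (msupp ν)) ε) := by
  set a := sInf (msupp μ)
  set b := sInf (msupp ν)
  have hmap : mconv μ ν (Metric.ball (a + b) ε)
      = (μ.prod ν) ((fun p : ℝ × ℝ => p.1 + p.2) ⁻¹' Metric.ball (a + b) ε) := by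
    rw [mconv, Measure.map_apply (by fun_prop) Metric.isOpen_ball.measurableSet]
  constructor
  · rw [hmap, ← Measure.prod_prod]
    apply measure_mono
    rintro ⟨x, y⟩ ⟨hx, hy⟩
    simp only [Metric.mem_ball, Real.dist_eq, Set.mem_preimage] at *
    have : x + y - (a + b) = (x - a) + (y - b) := by ring
    rw [this]
    calc |(x - a) + (y - b)| ≤ |x - a| + |y - b| := abs_add_le _ _
      _ < ε/2 + ε/2 := add_lt_add hx hy
      _ = ε := by ring
  · rw [hmap]
    have hN : (μ.prod ν) ({x | x < a} ×ˢ Set.univ ∪ Set.univ ×ˢ {y | y < b}) = 0 := by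
      apply measure_union_null
      · rw [Measure.prod_prod, lt_sInf_null μ hμc, zero_mul]
      · rw [Measure.prod_prod, lt_sInf_null ν hνc, mul_zero]
    calc (μ.prod ν) ((fun p : ℝ × ℝ => p.1 + p.2) ⁻¹' Metric.ball (a + b) ε)
        ≤ (μ.prod ν) (Metric.ball a ε ×ˢ Metric.ball b ε
            ∪ ({x | x < a} ×ˢ Set.univ ∪ Set.univ ×ˢ {y | y < b})) := by
          apply measure_mono
          rintro ⟨x, y⟩ hp
          simp only [Set.mem_preimage, Metric.mem_ball, Real.dist_eq] at hp
          by_cases hxa : x < a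
          · exact Or.inr (Or.inl ⟨hxa, Set.mem_univ _⟩)
          · by_cases hyb : y < b
            · exact Or.inr (Or.inr ⟨Set.mem_univ _, hyb⟩)
            · push_neg at hxa hyb
              left
              have habs := abs_lt.mp hp
              constructor <;> simp only [Metric.mem_ball, Real.dist_eq, abs_lt] <;>
                constructor <;> linarith
      _ ≤ (μ.prod ν) (Metric.ball a ε ×ˢ Metric.ball b ε)
            + (μ.prod ν) ({x | x < a} ×ˢ Set.univ ∪ Set.univ ×ˢ {y | y < b}) :=
          measure_union_le _ _
      _ = μ (Metric.ball a ε) * ν (Metric.ball b ε) := by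
          rw [hN, add_zero, Measure.prod_prod]
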